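/- arXiv:1905.03062 — 5 statements merged into one kernel-verified Lean document; each statement's English description precedes it below -/
import Mathlib

section
/- Let G be a group generated by two subgroups F and K (i.e. G = ⟨F ∪ K⟩), and let H be a subgroup contained in both F and K such that H has finite index in F and finite index in K. Then H is almost normal in G. -/
/-- The conjugate subgroup `gHg⁻¹`. -/
def conjSubgroup {G : Type*} [Group G] (g : G) (H : Subgroup G) : Subgroup G :=
  H.map (MulAut.conj g).toMonoidHom

/-- A subgroup `H ≤ G` is almost normal if `H` is commensurable with each of
its conjugates `gHg⁻¹`. -/
def AlmostNormal {G : Type*} [Group G] (H : Subgroup G) : Prop :=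
  ∀ g : G, Subgroup.Commensurable H (conjSubgroup g H)

open Pointwise in
lemma conjSubgroup_eq_smul {G : Type*} [Group G] (g : G) (H : Subgroup G) :
    conjSubgroup g H = ConjAct.toConjAct g • H := by
  ext x
  simp only [conjSubgroup, Subgroup.mem_pointwise_smul_iff_inv_smul_mem,
    ← ConjAct.toConjAct_inv, ConjAct.toConjAct_smul, Subgroup.mem_map,
    MulEquiv.coe_toMonoidHom, MulAut.conj_apply]
  constructor
  · rintro ⟨y, hy, rfl⟩; simpa [mul_assoc]
  · intro h; exact ⟨g⁻¹ * x * g, by simpa using h, by group⟩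

lemma commensurable_of_le_of_relindex {G : Type*} [Group G] {A B F : Subgroup G}
    (hA : A ≤ F) (hB : B ≤ F) (hAF : A.relIndex F ≠ 0) (hBF : B.relIndex F ≠ 0) :
    Subgroup.Commensurable A B := by
  have key : ∀ {X Y : Subgroup G}, X ≤ F → Y ≤ F → X.relIndex F ≠ 0 → Y.relIndex F ≠ 0 →
      X.relIndex Y ≠ 0 := by
    intro X Y hX hY hXF hYF
    have h1 : (X ⊓ Y).relIndex F ≠ 0 := Subgroup.relIndex_inf_ne_zero hXF hYF
    have h2 : (X ⊓ Y).relIndex Y * Y.relIndex F = (X ⊓ Y).relIndex F :=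
      Subgroup.relIndex_mul_relIndex _ _ _ inf_le_right hY
    rw [← Subgroup.inf_relIndex_right]
    intro h
    rw [h, zero_mul] at h2
    exact h1 h2.symm
  exact ⟨key hA hB hAF hBF, key hB hA hBF hAF⟩

open Pointwise in
lemma smul_self_of_mem {G : Type*} [Group G] {F : Subgroup G} {g : G} (hg : g ∈ F) :
    ConjAct.toConjAct g • F = F := by
  ext x
  simp only [Subgroup.mem_pointwise_smul_iff_inv_smul_mem, ← ConjAct.toConjAct_inv,
    ConjAct.toConjAct_smul]
  constructor
  · intro h
    have := F.mul_mem (F.mul_mem hg h) (F.inv_mem hg)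
    simpa [mul_assoc] using this
  · intro h
    simpa using F.mul_mem (F.mul_mem (F.inv_mem hg) h) hg

open Pointwise in
lemma mem_commensurator_of_mem {G : Type*} [Group G] {F H : Subgroup G}
    (hHF : H ≤ F) (hFfin : H.relIndex F ≠ 0) {g : G} (hg : g ∈ F) :
    g ∈ Subgroup.Commensurable.commensurator H := by
  rw [Subgroup.Commensurable.commensurator_mem_iff]
  have hHcF : Subgroup.Commensurable H F := by
    refine ⟨hFfin, ?_⟩
    rw [← Subgroup.inf_relIndex_right, inf_of_le_right hHF, Subgroup.relIndex_self]
    exact one_ne_zero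
  have hconj : Subgroup.Commensurable (ConjAct.toConjAct g • H) (ConjAct.toConjAct g • F) :=
    (Subgroup.Commensurable.commensurable_conj _).mp hHcF
  rw [smul_self_of_mem hg] at hconj
  exact hconj.trans hHcF.symm

/-- If `G` is generated by subgroups `F` and `K`, and `H` is a subgroup contained
in both `F` and `K` with finite index in each, then `H` is almost normal in `G`. -/
theorem almostNormal_of_finiteIndex_in_generating_pair {G : Type*} [Group G]
    (F K H : Subgroup G)
    (hgen : Subgroup.closure ((F : Set G) ∪ (K : Set G)) = ⊤)
    (hHF : H ≤ F) (hHK : H ≤ K)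
    (hFfin : H.relIndex F ≠ 0) (hKfin : H.relIndex K ≠ 0) :
    AlmostNormal H := by
  intro g
  have hle : Subgroup.closure ((F : Set G) ∪ (K : Set G)) ≤ Subgroup.Commensurable.commensurator H := by
    rw [Subgroup.closure_le]
    rintro x (hx | hx)
    · exact mem_commensurator_of_mem hHF hFfin hx
    · exact mem_commensurator_of_mem hHK hKfin hx
  have hg : g ∈ Subgroup.Commensurable.commensurator H := hle (hgen ▸ Subgroup.mem_top g)
  rw [Subgroup.Commensurable.commensurator_mem_iff] at hg
  rw [conjSubgroup_eq_smul]
  exact hg.symm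
end

section
/- Let G be a group with a finite generating set S, equipped with the word metric, and let H ≤ G be a subgroup. Then H is almost normal in G if and only if for every g ∈ G the Hausdorff distance between the left coset gH and H (as subsets of the metric space G) is finite. -/
open Pointwise

/-- The word length of `g` with respect to the generating set `S`: the least `n`
such that `g` is a product of `n` elements of `S ∪ S⁻¹`. -/
noncomputable def wordLength {G : Type*} [Group G] (S : Set G) (g : G) : ℕ :=
  sInf {n : ℕ | ∃ l : List G, l.length = n ∧ (∀ x ∈ l, x ∈ S ∪ S⁻¹) ∧ l.prod = g}

/-- The word metric on `G` with respect to the generating set `S`. -/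
noncomputable def wordDist {G : Type*} [Group G] (S : Set G) (g k : G) : ℝ :=
  (wordLength S (g⁻¹ * k) : ℝ)

lemma mem_conjSubgroup {G : Type*} [Group G] (g : G) (H : Subgroup G) (x : G) :
    x ∈ conjSubgroup g H ↔ ∃ h ∈ H, g * h * g⁻¹ = x := by
  simp [conjSubgroup, Subgroup.mem_map]

lemma relindex_ne_zero_of_map {G : Type*} [Group G] {N K : Subgroup G} {β : Type*} [Finite β]
    (f : K → β) (hf : ∀ a b : K, f a = f b → (a : G)⁻¹ * b ∈ N) : N.relIndex K ≠ 0 := by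
  have hfin : Finite (K ⧸ N.subgroupOf K) := by
    refine Finite.of_injective (fun q : K ⧸ N.subgroupOf K => f q.out) ?_
    intro q q' hqq
    have h2 := hf _ _ hqq
    rw [← QuotientGroup.out_eq' q, ← QuotientGroup.out_eq' q', QuotientGroup.eq]
    simpa [Subgroup.mem_subgroupOf] using h2
  exact Subgroup.index_ne_zero_of_finite

lemma wordLength_exists {G : Type*} [Group G] {S : Set G} (hgen : Subgroup.closure S = ⊤)
    (g : G) : ∃ l : List G, l.length = wordLength S g ∧ (∀ x ∈ l, x ∈ S ∪ S⁻¹) ∧ l.prod = g := by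
  have hne : {n : ℕ | ∃ l : List G, l.length = n ∧ (∀ x ∈ l, x ∈ S ∪ S⁻¹) ∧ l.prod = g}.Nonempty := by
    have hg : g ∈ Submonoid.closure (S ∪ S⁻¹) := by
      rw [← Subgroup.closure_toSubmonoid, hgen]; trivial
    obtain ⟨l, hl, hp⟩ := Submonoid.exists_list_of_mem_closure hg
    exact ⟨l.length, l, rfl, hl, hp⟩
  exact Nat.sInf_mem hne

lemma ball_finite {G : Type*} [Group G] {S : Set G} (hS : S.Finite)
    (hgen : Subgroup.closure S = ⊤) (n : ℕ) : {g : G | wordLength S g ≤ n}.Finite := by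
  have hT : (S ∪ S⁻¹).Finite := hS.union hS.inv
  have key : ∀ m : ℕ,
      {g : G | ∃ l : List G, l.length ≤ m ∧ (∀ x ∈ l, x ∈ S ∪ S⁻¹) ∧ l.prod = g}.Finite := by
    intro m
    induction m with
    | zero =>
      refine (Set.finite_singleton (1 : G)).subset ?_
      rintro g ⟨l, hl, -, hp⟩
      rw [Nat.le_zero, List.length_eq_zero_iff] at hl
      subst hl
      simp at hp
      simp [hp.symm]
    | succ m ih =>
      refine ((hT.mul ih).insert 1).subset ?_
      rintro g ⟨l, hl, hmem, hp⟩
      cases l with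
      | nil => left; simp at hp; simp [hp.symm]
      | cons x l' =>
        right
        refine ⟨x, hmem x (by simp), l'.prod, ?_, by simp at hp; simp [hp]⟩
        exact ⟨l', by simpa using Nat.succ_le_succ_iff.mp (by simpa using hl),
          fun y hy => hmem y (by simp [hy]), rfl⟩
  refine (key n).subset ?_
  intro g hg
  obtain ⟨l, hlen, hmem, hp⟩ := wordLength_exists hgen g
  exact ⟨l, by rw [hlen]; exact hg, hmem, hp⟩

/-- For a group `G` with a finite generating set `S`, equipped with the word metric,
a subgroup `H` is almost normal in `G` if and only if every left coset `gH` is at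
finite Hausdorff distance from `H`. -/
theorem almostNormal_iff_cosets_finite_hausdorff_distance {G : Type*} [Group G]
    (S : Set G) (hS : S.Finite) (hgen : Subgroup.closure S = ⊤) (H : Subgroup G) :
    AlmostNormal H ↔
      ∀ g : G, ∃ r : ℝ, 0 ≤ r ∧
        (∀ a ∈ g • (H : Set G), ∃ b ∈ (H : Set G), wordDist S a b ≤ r) ∧
        (∀ b ∈ (H : Set G), ∃ a ∈ g • (H : Set G), wordDist S a b ≤ r) := by
  constructor
  · intro hAN g
    -- finiteness of the two relevant quotients
    have h1 : Finite (H ⧸ (conjSubgroup g⁻¹ H).subgroupOf H) := by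
      have := (hAN g⁻¹).2
      rw [Subgroup.relIndex] at this
      rwa [← not_infinite_iff_finite, ← Subgroup.index_eq_zero_iff_infinite]
    have h2 : Finite (H ⧸ (conjSubgroup g H).subgroupOf H) := by
      have := (hAN g).2
      rw [Subgroup.relIndex] at this
      rwa [← not_infinite_iff_finite, ← Subgroup.index_eq_zero_iff_infinite]
    obtain ⟨n₁, hn₁⟩ := Finite.exists_le
      (fun q : H ⧸ (conjSubgroup g⁻¹ H).subgroupOf H => wordLength S ((q.out : G) * g⁻¹))
    obtain ⟨n₂, hn₂⟩ := Finite.exists_le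
      (fun q : H ⧸ (conjSubgroup g H).subgroupOf H => wordLength S (g⁻¹ * (q.out : G)⁻¹))
    refine ⟨(max n₁ n₂ : ℕ), by positivity, ?_, ?_⟩
    · rintro a ha
      obtain ⟨h, hh, rfl⟩ := ha
      set q : H ⧸ (conjSubgroup g⁻¹ H).subgroupOf H := QuotientGroup.mk ⟨h⁻¹, inv_mem hh⟩ with hq
      set x : H := q.out with hx
      have hmem : (x : G)⁻¹ * h⁻¹ ∈ conjSubgroup g⁻¹ H := by
        have : QuotientGroup.mk x = QuotientGroup.mk (⟨h⁻¹, inv_mem hh⟩ : H) :=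
          QuotientGroup.out_eq' q
        have := QuotientGroup.eq.mp this
        simpa [Subgroup.mem_subgroupOf] using this
      obtain ⟨h', hh', hconj⟩ := (mem_conjSubgroup _ _ _).mp hmem
      refine ⟨h'⁻¹, inv_mem hh', ?_⟩
      have he : (g • h)⁻¹ * h'⁻¹ = (x : G) * g⁻¹ := by
        have hh'e : h' = g * ((x : G)⁻¹ * h⁻¹) * g⁻¹ := by
          rw [← hconj]; group
        rw [smul_eq_mul, hh'e]; group
      rw [wordDist, he]
      calc (wordLength S ((x : G) * g⁻¹) : ℝ) ≤ n₁ := by exact_mod_cast hn₁ q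
        _ ≤ ((max n₁ n₂ : ℕ) : ℝ) := by exact_mod_cast le_max_left n₁ n₂
    · rintro b hb
      set q : H ⧸ (conjSubgroup g H).subgroupOf H := QuotientGroup.mk ⟨b⁻¹, inv_mem hb⟩ with hq
      set x : H := q.out with hx
      have hmem : (x : G)⁻¹ * b⁻¹ ∈ conjSubgroup g H := by
        have : QuotientGroup.mk x = QuotientGroup.mk (⟨b⁻¹, inv_mem hb⟩ : H) :=
          QuotientGroup.out_eq' q
        have := QuotientGroup.eq.mp this
        simpa [Subgroup.mem_subgroupOf] using this
      obtain ⟨h, hh, hconj⟩ := (mem_conjSubgroup _ _ _).mp hmem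
      refine ⟨g * h⁻¹, ⟨h⁻¹, inv_mem hh, rfl⟩, ?_⟩
      have he : (g * h⁻¹)⁻¹ * b = g⁻¹ * (x : G)⁻¹ := by
        have hhe : h = g⁻¹ * ((x : G)⁻¹ * b⁻¹) * g := by
          rw [← hconj]; group
        rw [hhe]; group
      rw [wordDist, he]
      calc (wordLength S (g⁻¹ * (x : G)⁻¹) : ℝ) ≤ n₂ := by exact_mod_cast hn₂ q
        _ ≤ ((max n₁ n₂ : ℕ) : ℝ) := by exact_mod_cast le_max_right n₁ n₂
  · intro hcond g
    obtain ⟨r, hr0, hc1, hc2⟩ := hcond g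
    set n := ⌈r⌉₊ with hn
    have hball : {c : G | wordLength S c ≤ n}.Finite := ball_finite hS hgen n
    haveI := hball.to_subtype
    constructor
    · -- H.relindex (conjSubgroup g H) ≠ 0
      have hchoice : ∀ x : conjSubgroup g H, ∃ c : {c : G | wordLength S c ≤ n},
          ∃ h ∈ H, ∃ b ∈ H, g * h * g⁻¹ = (x : G) ∧ h * g⁻¹ * b = (c : G) := by
        intro x
        obtain ⟨h, hh, hconj⟩ := (mem_conjSubgroup g H (x : G)).mp x.2
        obtain ⟨b, hb, hd⟩ := hc1 (g * h⁻¹) ⟨h⁻¹, inv_mem hh, rfl⟩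
        have hd' : wordLength S (h * g⁻¹ * b) ≤ n := by
          have e : (g * h⁻¹)⁻¹ * b = h * g⁻¹ * b := by group
          rw [wordDist, e] at hd
          have : (wordLength S (h * g⁻¹ * b) : ℝ) ≤ n := hd.trans (Nat.le_ceil r)
          exact_mod_cast this
        exact ⟨⟨h * g⁻¹ * b, hd'⟩, h, hh, b, hb, hconj, rfl⟩
      choose f hf using hchoice
      refine relindex_ne_zero_of_map f ?_
      rintro x x' hxx
      obtain ⟨h, hh, b, hb, hconj, hc⟩ := hf x
      obtain ⟨h', hh', b', hb', hconj', hc'⟩ := hf x'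
      rw [hxx] at hc
      have hcc : h * g⁻¹ * b = h' * g⁻¹ * b' := by rw [hc, hc']
      have : (x : G)⁻¹ * (x' : G) = b * b'⁻¹ := by
        rw [← hconj, ← hconj']
        have hh'eq : h' = h * g⁻¹ * b * b'⁻¹ * g := by
          rw [hcc]; group
        rw [hh'eq]; group
      rw [this]
      exact mul_mem hb (inv_mem hb')
    · -- (conjSubgroup g H).relindex H ≠ 0
      have hchoice : ∀ b : H, ∃ c : {c : G | wordLength S c ≤ n},
          ∃ h ∈ H, h⁻¹ * g⁻¹ * (b : G)⁻¹ = (c : G) := by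
        intro b
        obtain ⟨a, ha, hd⟩ := hc2 (b : G)⁻¹ (inv_mem b.2)
        obtain ⟨h, hh, rfl⟩ := ha
        have hd' : wordLength S (h⁻¹ * g⁻¹ * (b : G)⁻¹) ≤ n := by
          have e : (g • h)⁻¹ * (b : G)⁻¹ = h⁻¹ * g⁻¹ * (b : G)⁻¹ := by rw [smul_eq_mul]; group
          rw [wordDist, e] at hd
          have : (wordLength S (h⁻¹ * g⁻¹ * (b : G)⁻¹) : ℝ) ≤ n := hd.trans (Nat.le_ceil r)
          exact_mod_cast this
        exact ⟨⟨_, hd'⟩, h, hh, rfl⟩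
      choose f hf using hchoice
      refine relindex_ne_zero_of_map f ?_
      rintro b b' hbb
      obtain ⟨h, hh, hc⟩ := hf b
      obtain ⟨h', hh', hc'⟩ := hf b'
      rw [hbb] at hc
      have hcc : h⁻¹ * g⁻¹ * (b : G)⁻¹ = h'⁻¹ * g⁻¹ * (b' : G)⁻¹ := by rw [hc, hc']
      rw [mem_conjSubgroup]
      refine ⟨h * h'⁻¹, mul_mem hh (inv_mem hh'), ?_⟩
      have hbe : (b : G)⁻¹ = g * h * (h⁻¹ * g⁻¹ * (b : G)⁻¹) := by group
      rw [hcc] at hbe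
      rw [hbe]; group
end

section
/- Let G be a group and let t ∈ G be an element of infinite order such that the cyclic subgroup ⟨t⟩ is almost normal in G. Then: (a) for every g ∈ G there exist nonzero integers p and q such that t^q = g t^p g⁻¹; and (b) there is a function h : G → ℝ (the height function) such that h(g) = log|p/q| whenever p, q are nonzero integers with t^q = g t^p g⁻¹, and h is a group homomorphism from G to the additive group (ℝ, +). -/
/-- If `t ∈ G` has infinite order and `⟨t⟩` is almost normal in `G`, then: (a) for
every `g ∈ G` there are nonzero integers `p`, `q` with `t^q = g t^p g⁻¹`; and (b)
there is a height function `h : G → ℝ` with `h g = log |p/q|` whenever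
`t^q = g t^p g⁻¹` with `p, q` nonzero, and `h` is a homomorphism to `(ℝ, +)`. -/
theorem height_function_exists {G : Type*} [Group G] (t : G)
    (ht : Infinite (Subgroup.zpowers t))
    (han : AlmostNormal (Subgroup.zpowers t)) :
    (∀ g : G, ∃ p q : ℤ, p ≠ 0 ∧ q ≠ 0 ∧ t ^ q = g * t ^ p * g⁻¹) ∧
    ∃ h : G → ℝ,
      (∀ (g : G) (p q : ℤ), p ≠ 0 → q ≠ 0 → t ^ q = g * t ^ p * g⁻¹ →
        h g = Real.log |(p : ℝ) / (q : ℝ)|) ∧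
      ∀ g k : G, h (g * k) = h g + h k := by
  -- t has infinite order
  have hfin : ¬ IsOfFinOrder t := by
    rw [← infinite_zpowers]
    exact Set.infinite_coe_iff.mp ht
  have hinj : Function.Injective fun n : ℤ => t ^ n :=
    injective_zpow_iff_not_isOfFinOrder.mpr hfin
  -- existence of p, q
  have main : ∀ g : G, ∃ p q : ℤ, p ≠ 0 ∧ q ≠ 0 ∧ t ^ q = g * t ^ p * g⁻¹ := by
    intro g
    obtain ⟨-, h2⟩ := han g
    -- find q ≠ 0 with t^q ∈ conjSubgroup g (zpowers t)
    have hq : ∃ q : ℤ, q ≠ 0 ∧ t ^ q ∈ conjSubgroup g (Subgroup.zpowers t) := by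
      by_contra hcon
      push_neg at hcon
      have hbot : (conjSubgroup g (Subgroup.zpowers t)).subgroupOf
          (Subgroup.zpowers t) = ⊥ := by
        rw [eq_bot_iff]
        rintro ⟨x, hx⟩ hmem
        obtain ⟨n, rfl⟩ := Subgroup.mem_zpowers_iff.mp hx
        have : t ^ n ∈ conjSubgroup g (Subgroup.zpowers t) := hmem
        rcases eq_or_ne n 0 with rfl | hn
        · simp [Subgroup.mem_bot, Subtype.ext_iff]
        · exact absurd this (hcon n hn)
      have : (conjSubgroup g (Subgroup.zpowers t)).relIndex (Subgroup.zpowers t) = 0 := by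
        rw [Subgroup.relIndex, hbot, Subgroup.index_bot]
        exact Nat.card_eq_zero_of_infinite
      exact h2 this
    obtain ⟨q, hq0, hqmem⟩ := hq
    obtain ⟨x, hx, hconj⟩ := hqmem
    obtain ⟨p, rfl⟩ := Subgroup.mem_zpowers_iff.mp hx
    have heq : t ^ q = g * t ^ p * g⁻¹ := by
      simpa [MulAut.conj, mul_assoc] using hconj.symm
    refine ⟨p, q, ?_, hq0, heq⟩
    rintro rfl
    apply hq0
    have : t ^ q = t ^ (0:ℤ) := by simpa using heq
    exact hinj this
  refine ⟨main, ?_⟩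
  -- well-definedness
  have wd : ∀ (g : G) (p q p' q' : ℤ), q ≠ 0 → q' ≠ 0 →
      t ^ q = g * t ^ p * g⁻¹ → t ^ q' = g * t ^ p' * g⁻¹ →
      |(p : ℝ) / q| = |(p' : ℝ) / q'| := by
    intro g p q p' q' hq hq' h1 h2
    have key : t ^ (q * p') = t ^ (q' * p) := by
      calc t ^ (q * p') = (t ^ q) ^ p' := by rw [zpow_mul]
        _ = g * (t ^ p) ^ p' * g⁻¹ := by rw [h1, conj_zpow]
        _ = g * (t ^ p') ^ p * g⁻¹ := by
            rw [← zpow_mul, ← zpow_mul, mul_comm p p']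
        _ = (g * t ^ p' * g⁻¹) ^ p := by rw [conj_zpow]
        _ = (t ^ q') ^ p := by rw [h2]
        _ = t ^ (q' * p) := by rw [zpow_mul]
    have hqp : q * p' = q' * p := hinj key
    have : (p : ℝ) / q = (p' : ℝ) / q' := by
      rw [div_eq_div_iff (by exact_mod_cast hq) (by exact_mod_cast hq')]
      have : (q : ℝ) * p' = q' * p := by exact_mod_cast hqp
      linarith
    rw [this]
  -- choose p, q for each g
  choose P Q hP hQ hPQ using main
  refine ⟨fun g => Real.log |(P g : ℝ) / (Q g : ℝ)|, ?_, ?_⟩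
  · intro g p q hp hq heq
    dsimp only
    rw [wd g (P g) (Q g) p q (hQ g) hq (hPQ g) heq]
  · intro g k
    dsimp only
    have hcomb : t ^ (Q g * Q k) = (g * k) * t ^ (P g * P k) * (g * k)⁻¹ := by
      calc t ^ (Q g * Q k) = (t ^ (Q g)) ^ (Q k) := by rw [zpow_mul]
        _ = g * (t ^ (P g)) ^ (Q k) * g⁻¹ := by rw [hPQ g, conj_zpow]
        _ = g * (t ^ (Q k)) ^ (P g) * g⁻¹ := by
            rw [← zpow_mul, ← zpow_mul, mul_comm]
        _ = g * (k * (t ^ (P k)) ^ (P g) * k⁻¹) * g⁻¹ := by rw [hPQ k, conj_zpow]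
        _ = (g * k) * t ^ (P g * P k) * (g * k)⁻¹ := by
            rw [← zpow_mul, mul_comm (P k) (P g)]
            group
    have := wd (g * k) (P (g * k)) (Q (g * k)) (P g * P k) (Q g * Q k)
      (hQ (g * k)) (mul_ne_zero (hQ g) (hQ k)) (hPQ (g * k)) hcomb
    rw [this]
    have h1 : |(P g : ℝ) / Q g| ≠ 0 := by
      rw [abs_ne_zero]
      exact div_ne_zero (Int.cast_ne_zero.mpr (hP g)) (Int.cast_ne_zero.mpr (hQ g))
    have h2 : |(P k : ℝ) / Q k| ≠ 0 := by
      rw [abs_ne_zero]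
      exact div_ne_zero (Int.cast_ne_zero.mpr (hP k)) (Int.cast_ne_zero.mpr (hQ k))
    rw [show |((P g * P k : ℤ) : ℝ) / ((Q g * Q k : ℤ) : ℝ)| =
        |(P g : ℝ) / Q g| * |(P k : ℝ) / Q k| by
      push_cast
      rw [← abs_mul, mul_div_mul_comm]]
    exact Real.log_mul h1 h2
end

section
/- Let G be a finitely generated group and let t ∈ G be an element of infinite order such that the cyclic subgroup ⟨t⟩ is almost normal in G. Suppose that for all g ∈ G and all nonzero integers p, q, the relation t^q = g t^p g⁻¹ implies |p| = |q|. Then there exists a positive integer M such that g⟨t^M⟩g⁻¹ = ⟨t^M⟩ for all g ∈ G, i.e. the subgroup ⟨t^M⟩ is normal in G. -/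
section aux

variable {G : Type*} [Group G]

/-- `g` conjugates `x` to `x` or `x⁻¹`. -/
private def PC (g x : G) : Prop := g * x * g⁻¹ = x ∨ g * x * g⁻¹ = x⁻¹

private lemma PC.inv_base {g x : G} (h : PC g x) : PC g x⁻¹ := by
  rcases h with h | h
  · left; rw [← conj_inv, h]
  · right; rw [← conj_inv, h]

private lemma PC.pow {g x : G} (h : PC g x) (k : ℕ) : PC g (x ^ k) := by
  rcases h with h | h
  · left; rw [← conj_pow, h]
  · right; rw [← conj_pow, h, inv_pow]

private lemma PC.inv {g x : G} (h : PC g x) : PC g⁻¹ x := by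
  rcases h with h | h
  · left
    rw [inv_inv]
    conv_lhs => rw [← h]
    group
  · right
    rw [inv_inv]
    have h1 : g * x⁻¹ * g⁻¹ = x := by
      have := congrArg Inv.inv h
      simpa [mul_inv_rev, mul_assoc] using this
    conv_lhs => rw [← h1]
    group

private lemma PC.mem_normalizer {g x : G} (h : PC g x) :
    g ∈ Subgroup.normalizer (Subgroup.zpowers x : Set G) := by
  rw [Subgroup.mem_normalizer_iff]
  intro y
  constructor
  · intro hy
    rw [Subgroup.mem_zpowers_iff] at hy
    obtain ⟨k, rfl⟩ := hy
    have e : g * x ^ k * g⁻¹ = (g * x * g⁻¹) ^ k := conj_zpow.symm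
    rcases h with h | h
    · rw [e, h]; exact Subgroup.zpow_mem_zpowers x k
    · rw [e, h, inv_zpow, ← zpow_neg]; exact Subgroup.zpow_mem_zpowers x (-k)
  · intro hy
    rw [Subgroup.mem_zpowers_iff] at hy
    obtain ⟨k, hk⟩ := hy
    have hy' : y = g⁻¹ * x ^ k * g⁻¹⁻¹ := by rw [hk]; group
    rw [hy']
    have e : g⁻¹ * x ^ k * g⁻¹⁻¹ = (g⁻¹ * x * g⁻¹⁻¹) ^ k := conj_zpow.symm
    rcases h.inv with h' | h'
    · rw [e, h']; exact Subgroup.zpow_mem_zpowers x k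
    · rw [e, h', inv_zpow, ← zpow_neg]; exact Subgroup.zpow_mem_zpowers x (-k)

end aux

/-- Let `G` be finitely generated, `t` of infinite order with `⟨t⟩` almost normal
in `G`. If `t^q = g t^p g⁻¹` (with `p, q` nonzero) always implies `|p| = |q|`, then
some `⟨t^M⟩` (with `M` a positive integer) is normal in `G`. -/
theorem power_normal_of_trivial_height {G : Type*} [Group G] (hfg : Group.FG G)
    (t : G) (ht : Infinite (Subgroup.zpowers t))
    (han : AlmostNormal (Subgroup.zpowers t))
    (hiso : ∀ (g : G) (p q : ℤ), p ≠ 0 → q ≠ 0 → t ^ q = g * t ^ p * g⁻¹ → |p| = |q|) :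
    ∃ M : ℕ, 0 < M ∧ ∀ g : G,
      conjSubgroup g (Subgroup.zpowers (t ^ M)) = Subgroup.zpowers (t ^ M) := by
  classical
  have hord : orderOf t = 0 := by
    have := Nat.card_zpowers (a := t)
    rw [Nat.card_eq_zero_of_infinite] at this
    omega
  have hzpow : ∀ q : ℤ, q ≠ 0 → t ^ q ≠ 1 := by
    intro q hq h
    rw [zpow_eq_one_iff_modEq, hord] at h
    simp [Int.ModEq] at h
    exact hq h
  -- Step A: for every g there is a positive n with PC g (t ^ n)
  have key : ∀ g : G, ∃ n : ℕ, 0 < n ∧ PC g (t ^ n) := by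
    intro g
    obtain ⟨h1, h2⟩ := han g
    have hne : ∃ x : G, x ∈ Subgroup.zpowers t ⊓ conjSubgroup g (Subgroup.zpowers t) ∧ x ≠ 1 := by
      by_contra hcon
      push_neg at hcon
      have hbot : (conjSubgroup g (Subgroup.zpowers t)).subgroupOf (Subgroup.zpowers t) = ⊥ := by
        rw [Subgroup.eq_bot_iff_forall]
        intro x hx
        exact Subtype.ext (hcon x ⟨x.2, hx⟩)
      have : (conjSubgroup g (Subgroup.zpowers t)).relIndex (Subgroup.zpowers t) = 0 := by
        rw [Subgroup.relIndex, hbot, Subgroup.index_bot, Nat.card_eq_zero_of_infinite]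
      exact h2 this
    obtain ⟨x, hxmem, hxne⟩ := hne
    obtain ⟨q, rfl⟩ := Subgroup.mem_zpowers_iff.mp hxmem.1
    obtain ⟨y, hy, hxy⟩ := hxmem.2
    obtain ⟨p, rfl⟩ := Subgroup.mem_zpowers_iff.mp hy
    have hq : q ≠ 0 := fun h => hxne (by simp [h])
    have hconj : t ^ q = g * t ^ p * g⁻¹ := by simpa using hxy.symm
    have hp : p ≠ 0 := by
      intro h
      rw [h] at hconj
      simp at hconj
      exact hzpow q hq hconj
    have habs := hiso g p q hp hq hconj
    have hPC : PC g (t ^ q) := by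
      rcases abs_eq_abs.mp habs with hpq | hpq
      · left
        rw [hpq] at hconj
        exact hconj.symm
      · right
        rw [hpq] at hconj
        have h2 : (t ^ q)⁻¹ = (g * t ^ (-q) * g⁻¹)⁻¹ := congrArg Inv.inv hconj
        rw [h2, zpow_neg]
        group
    refine ⟨q.natAbs, Int.natAbs_pos.mpr hq, ?_⟩
    rcases Int.natAbs_eq q with h | h
    · have e : t ^ (q.natAbs : ℕ) = t ^ q := by
        rw [← zpow_natCast]; congr 1; omega
      rw [e]; exact hPC
    · have e : t ^ (q.natAbs : ℕ) = (t ^ q)⁻¹ := by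
        rw [← zpow_natCast, ← zpow_neg]; congr 1; omega
      rw [e]; exact hPC.inv_base
  -- Step B: generators
  obtain ⟨S, hSclos, hSfin⟩ := Group.fg_iff.mp hfg
  set n : G → ℕ := fun g => (key g).choose with hn
  set M : ℕ := ∏ s ∈ hSfin.toFinset, n s with hM
  have hMpos : 0 < M := Finset.prod_pos (fun s _ => (key s).choose_spec.1)
  refine ⟨M, hMpos, ?_⟩
  have hgen : ∀ s ∈ S, s ∈ Subgroup.normalizer (Subgroup.zpowers (t ^ M) : Set G) := by
    intro s hs
    obtain ⟨k, hk⟩ : n s ∣ M := Finset.dvd_prod_of_mem n (hSfin.mem_toFinset.mpr hs)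
    have hPC : PC s (t ^ M) := by
      rw [hk, pow_mul]
      exact ((key s).choose_spec.2).pow k
    exact hPC.mem_normalizer
  have hnorm : Subgroup.normalizer (Subgroup.zpowers (t ^ M) : Set G) = ⊤ := by
    rw [eq_top_iff, ← hSclos]
    exact (Subgroup.closure_le _).mpr hgen
  have hN : (Subgroup.zpowers (t ^ M)).Normal := Subgroup.normalizer_eq_top_iff.mp hnorm
  intro g
  apply le_antisymm
  · rintro x ⟨y, hy, rfl⟩
    exact hN.conj_mem y hy g
  · intro y hy
    refine ⟨g⁻¹ * y * g, ?_, ?_⟩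
    · simpa using hN.conj_mem y hy g⁻¹
    · show g * (g⁻¹ * y * g) * g⁻¹ = y
      group
end

section
/- Let G be a group with a finite generating set S, equipped with the word metric d, and let H be an almost normal subgroup of G. Set K := max over s ∈ S of the Hausdorff distance d_Haus(H, sH) (which is finite). Then: (i) for all g, k ∈ G, d_Haus(gH, kH) ≤ K·d(g,k); and (ii) any two left cosets gH, kH can be joined by a K-chain of left cosets with respect to d_Haus (i.e. a sequence of cosets gH = C₀, C₁, …, Cₙ = kH with d_Haus(C_{i−1}, C_i) ≤ K) of length n at most d_Haus(gH, kH). -/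
open Pointwise

/-- The Hausdorff distance between two subsets of `G` with respect to the word
metric determined by `S`. -/
noncomputable def wordHausdorffDist {G : Type*} [Group G] (S : Set G) (A B : Set G) : ℝ :=
  sInf {r : ℝ | 0 ≤ r ∧ (∀ a ∈ A, ∃ b ∈ B, wordDist S a b ≤ r) ∧
    ∀ b ∈ B, ∃ a ∈ A, wordDist S a b ≤ r}

section Aux
variable {G : Type*} [Group G] (S : Set G)

/-- The defining set of the Hausdorff distance. -/
def hdSet (A B : Set G) : Set ℝ :=
  {r : ℝ | 0 ≤ r ∧ (∀ a ∈ A, ∃ b ∈ B, wordDist S a b ≤ r) ∧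
    ∀ b ∈ B, ∃ a ∈ A, wordDist S a b ≤ r}

lemma wordHausdorffDist_eq (A B : Set G) :
    wordHausdorffDist S A B = sInf (hdSet S A B) := rfl

/-- The word-length defining set is nonempty. -/
lemma wordLength_set_nonempty (hgen : Subgroup.closure S = ⊤) (g : G) :
    {n : ℕ | ∃ l : List G, l.length = n ∧ (∀ x ∈ l, x ∈ S ∪ S⁻¹) ∧ l.prod = g}.Nonempty := by
  have hg : g ∈ (Subgroup.closure S).toSubmonoid := by rw [hgen]; trivial
  rw [Subgroup.closure_toSubmonoid] at hg
  obtain ⟨l, hl, hp⟩ := Submonoid.exists_list_of_mem_closure hg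
  exact ⟨l.length, l, rfl, hl, hp⟩

lemma wordLength_spec (hgen : Subgroup.closure S = ⊤) (g : G) :
    ∃ l : List G, l.length = wordLength S g ∧ (∀ x ∈ l, x ∈ S ∪ S⁻¹) ∧ l.prod = g :=
  Nat.sInf_mem (wordLength_set_nonempty S hgen g)

lemma wordLength_le (g : G) (l : List G) (hl : ∀ x ∈ l, x ∈ S ∪ S⁻¹) (hp : l.prod = g) :
    wordLength S g ≤ l.length :=
  Nat.sInf_le ⟨l, rfl, hl, hp⟩

lemma wordLength_one : wordLength S (1 : G) = 0 :=
  Nat.le_zero.mp (wordLength_le S 1 [] (by simp) (by simp))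

lemma wordLength_mul_le (hgen : Subgroup.closure S = ⊤) (g k : G) :
    wordLength S (g * k) ≤ wordLength S g + wordLength S k := by
  obtain ⟨l₁, h₁, hm₁, hp₁⟩ := wordLength_spec S hgen g
  obtain ⟨l₂, h₂, hm₂, hp₂⟩ := wordLength_spec S hgen k
  have := wordLength_le S (g * k) (l₁ ++ l₂) (by
    intro x hx; rcases List.mem_append.mp hx with h | h
    exacts [hm₁ x h, hm₂ x h]) (by rw [List.prod_append, hp₁, hp₂])
  simpa [h₁, h₂] using this

lemma mem_symm_inv {x : G} (hx : x ∈ S ∪ S⁻¹) : x⁻¹ ∈ S ∪ S⁻¹ := by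
  rcases hx with h | h
  · exact Or.inr (by simpa using h)
  · exact Or.inl (by simpa using h)

lemma wordLength_inv_le (hgen : Subgroup.closure S = ⊤) (g : G) : wordLength S g⁻¹ ≤ wordLength S g := by
  obtain ⟨l, h₁, hm, hp⟩ := wordLength_spec S hgen g
  have := wordLength_le S g⁻¹ ((l.map Inv.inv).reverse) (by
    intro x hx
    simp only [List.mem_reverse, List.mem_map] at hx
    obtain ⟨y, hy, rfl⟩ := hx
    exact mem_symm_inv S (hm y hy)) (by rw [List.prod_reverse_noncomm, List.map_map]
                                        simp [hp])
  simpa [h₁] using this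

lemma wordLength_inv (hgen : Subgroup.closure S = ⊤) (g : G) : wordLength S g⁻¹ = wordLength S g :=
  le_antisymm (wordLength_inv_le S hgen g) (by
    simpa using wordLength_inv_le S hgen g⁻¹)

lemma wordDist_symm (hgen : Subgroup.closure S = ⊤) (a b : G) : wordDist S a b = wordDist S b a := by
  unfold wordDist
  rw [show b⁻¹ * a = (a⁻¹ * b)⁻¹ by group, wordLength_inv S hgen]

lemma wordDist_left_inv (g a b : G) : wordDist S (g * a) (g * b) = wordDist S a b := by
  unfold wordDist; rw [show (g * a)⁻¹ * (g * b) = a⁻¹ * b by group]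

lemma wordDist_triangle (hgen : Subgroup.closure S = ⊤) (a b c : G) : wordDist S a c ≤ wordDist S a b + wordDist S b c := by
  unfold wordDist
  rw [show a⁻¹ * c = (a⁻¹ * b) * (b⁻¹ * c) by group]
  exact_mod_cast wordLength_mul_le S hgen _ _

lemma wordDist_nonneg (a b : G) : 0 ≤ wordDist S a b := Nat.cast_nonneg _

/-- translation invariance of the Hausdorff defining set -/
lemma hdSet_smul (hgen : Subgroup.closure S = ⊤) (g : G) (A B : Set G) : hdSet S (g • A) (g • B) = hdSet S A B := by
  ext r
  constructor
  · rintro ⟨h0, h1, h2⟩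
    refine ⟨h0, fun a ha => ?_, fun b hb => ?_⟩
    · obtain ⟨b, hb, hd⟩ := h1 (g • a) (Set.smul_mem_smul_set ha)
      obtain ⟨b', hb', rfl⟩ := hb
      exact ⟨b', hb', by
        simp only [smul_eq_mul] at hd; rwa [wordDist_left_inv] at hd⟩
    · obtain ⟨a, ha, hd⟩ := h2 (g • b) (Set.smul_mem_smul_set hb)
      obtain ⟨a', ha', rfl⟩ := ha
      exact ⟨a', ha', by simp only [smul_eq_mul] at hd; rwa [wordDist_left_inv] at hd⟩
  · rintro ⟨h0, h1, h2⟩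
    refine ⟨h0, fun a ha => ?_, fun b hb => ?_⟩
    · obtain ⟨a', ha', rfl⟩ := ha
      obtain ⟨b, hb, hd⟩ := h1 a' ha'
      exact ⟨g • b, Set.smul_mem_smul_set hb, by simpa [smul_eq_mul, wordDist_left_inv] using hd⟩
    · obtain ⟨b', hb', rfl⟩ := hb
      obtain ⟨a, ha, hd⟩ := h2 b' hb'
      exact ⟨g • a, Set.smul_mem_smul_set ha, by simpa [smul_eq_mul, wordDist_left_inv] using hd⟩

lemma hdSet_comm (hgen : Subgroup.closure S = ⊤) (A B : Set G) : hdSet S A B = hdSet S B A := by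
  ext r
  constructor <;> rintro ⟨h0, h1, h2⟩ <;> refine ⟨h0, fun a ha => ?_, fun b hb => ?_⟩
  · obtain ⟨b, hb, hd⟩ := h2 a ha
    exact ⟨b, hb, by rwa [wordDist_symm S hgen] at hd⟩
  · obtain ⟨a, ha, hd⟩ := h1 b hb
    exact ⟨a, ha, by rwa [wordDist_symm S hgen] at hd⟩
  · obtain ⟨b, hb, hd⟩ := h2 a ha
    exact ⟨b, hb, by rwa [wordDist_symm S hgen] at hd⟩
  · obtain ⟨a, ha, hd⟩ := h1 b hb
    exact ⟨a, ha, by rwa [wordDist_symm S hgen] at hd⟩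

lemma hdSet_bddBelow (A B : Set G) : BddBelow (hdSet S A B) :=
  ⟨0, fun _ hr => hr.1⟩

lemma wordHausdorffDist_nonneg (A B : Set G) : 0 ≤ wordHausdorffDist S A B :=
  Real.sInf_nonneg fun _ hr => hr.1

lemma wordHausdorffDist_le (A B : Set G) {r : ℝ} (hr : r ∈ hdSet S A B) :
    wordHausdorffDist S A B ≤ r :=
  csInf_le (hdSet_bddBelow S A B) hr

lemma hdSet_triangle (hgen : Subgroup.closure S = ⊤) {A B C : Set G} {x y : ℝ} (hx : x ∈ hdSet S A B) (hy : y ∈ hdSet S B C) :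
    x + y ∈ hdSet S A C := by
  obtain ⟨hx0, hx1, hx2⟩ := hx
  obtain ⟨hy0, hy1, hy2⟩ := hy
  refine ⟨by linarith, fun a ha => ?_, fun c hc => ?_⟩
  · obtain ⟨b, hb, hd1⟩ := hx1 a ha
    obtain ⟨c, hc, hd2⟩ := hy1 b hb
    exact ⟨c, hc, le_trans (wordDist_triangle S hgen a b c) (by linarith)⟩
  · obtain ⟨b, hb, hd2⟩ := hy2 c hc
    obtain ⟨a, ha, hd1⟩ := hx2 b hb
    exact ⟨a, ha, le_trans (wordDist_triangle S hgen a b c) (by linarith)⟩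

lemma wordHausdorffDist_triangle (hgen : Subgroup.closure S = ⊤) {A B C : Set G} (hAB : (hdSet S A B).Nonempty)
    (hBC : (hdSet S B C).Nonempty) :
    wordHausdorffDist S A C ≤ wordHausdorffDist S A B + wordHausdorffDist S B C := by
  rw [wordHausdorffDist_eq, wordHausdorffDist_eq, wordHausdorffDist_eq]
  have key : ∀ x ∈ hdSet S A B, sInf (hdSet S A C) ≤ x + sInf (hdSet S B C) := by
    intro x hx
    have : sInf (hdSet S A C) - x ≤ sInf (hdSet S B C) := by
      apply le_csInf hBC
      intro y hy
      have := csInf_le (hdSet_bddBelow S A C) (hdSet_triangle S hgen hx hy)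
      linarith
    linarith
  have : sInf (hdSet S A C) - sInf (hdSet S B C) ≤ sInf (hdSet S A B) := by
    apply le_csInf hAB
    intro x hx
    have := key x hx
    linarith
  linarith

end Aux

lemma lemmaA {G : Type*} [Group G] (S : Set G) (H : Subgroup G) (han : AlmostNormal H) (g : G) :
    ∃ r : ℝ, 0 ≤ r ∧ ∀ x ∈ H, ∃ y ∈ H, (wordLength S (x⁻¹ * g * y) : ℝ) ≤ r := by
  have hfin : Finite (H ⧸ (conjSubgroup g H).subgroupOf H) := by
    have h2 := (han g).2
    exact (Nat.card_ne_zero.mp h2).2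
  set f : H ⧸ (conjSubgroup g H).subgroupOf H → ℝ :=
    fun q => (wordLength S ((q.out : G) * g) : ℝ) with hf
  obtain ⟨r, hr⟩ := (Set.finite_range f).bddAbove
  refine ⟨max r 0, le_max_right _ _, ?_⟩
  intro x hx
  set xh : H := ⟨x, hx⟩ with hxh
  set q : H ⧸ (conjSubgroup g H).subgroupOf H := QuotientGroup.mk xh⁻¹ with hq
  set t : H := q.out with htdef
  have ht : (QuotientGroup.mk t : H ⧸ (conjSubgroup g H).subgroupOf H) = QuotientGroup.mk xh⁻¹ := by
    rw [htdef, hq]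
    exact Quotient.out_eq _
  rw [QuotientGroup.eq, Subgroup.mem_subgroupOf] at ht
  obtain ⟨v, hv, hveq⟩ := Subgroup.mem_map.mp ht
  simp only [MulEquiv.coe_toMonoidHom, MulAut.conj_apply] at hveq
  -- hveq : g * v * g⁻¹ = ↑(t⁻¹ * xh⁻¹)
  have hco : ((t⁻¹ * xh⁻¹ : H) : G) = (t : G)⁻¹ * x⁻¹ := by rfl
  rw [hco] at hveq
  refine ⟨v⁻¹, H.inv_mem hv, ?_⟩
  have key : x⁻¹ * g * v⁻¹ = (t : G) * g := by
    have hx' : x⁻¹ = (t : G) * (g * v * g⁻¹) := by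
      rw [hveq]; group
    rw [hx']; group
  rw [key]
  exact le_trans (hr ⟨q, rfl⟩) (le_max_left _ _)


section Main
variable {G : Type*} [Group G] (S : Set G) (H : Subgroup G)

/-- membership in a left coset -/
lemma mem_coset_iff (g x : G) : x ∈ g • (H : Set G) ↔ g⁻¹ * x ∈ H := by
  constructor
  · rintro ⟨y, hy, rfl⟩; simpa using hy
  · intro hx; exact ⟨g⁻¹ * x, hx, by simp⟩

lemma self_mem_coset (g : G) : g ∈ g • (H : Set G) :=
  (mem_coset_iff H g g).mpr (by simpa using H.one_mem)

lemma coset_eq_of_mem {g x : G} (hx : x ∈ g • (H : Set G)) :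
    x • (H : Set G) = g • (H : Set G) := by
  rw [mem_coset_iff] at hx
  ext z
  rw [mem_coset_iff, mem_coset_iff]
  constructor
  · intro hz
    have := H.mul_mem hx hz
    simpa [mul_assoc] using this
  · intro hz
    have := H.mul_mem (H.inv_mem hx) hz
    simpa [mul_assoc] using this

/-- The defining set of the Hausdorff distance between cosets is nonempty:
finiteness of the Hausdorff distance, from almost normality. -/
lemma hdSet_coset_nonempty_one (hgen : Subgroup.closure S = ⊤) (han : AlmostNormal H) (g : G) :
    (hdSet S ((H : Set G)) (g • (H : Set G))).Nonempty := by
  obtain ⟨r₁, hr₁0, hr₁⟩ := lemmaA S H han g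
  obtain ⟨r₂, hr₂0, hr₂⟩ := lemmaA S H han g⁻¹
  refine ⟨max r₁ r₂, le_max_of_le_left hr₁0, fun a ha => ?_, fun b hb => ?_⟩
  · obtain ⟨y, hy, hlen⟩ := hr₁ a ha
    refine ⟨g * y, (mem_coset_iff H g _).mpr (by simpa using hy), ?_⟩
    unfold wordDist
    rw [show a⁻¹ * (g * y) = a⁻¹ * g * y by group]
    exact le_max_of_le_left hlen
  · rw [mem_coset_iff] at hb
    obtain ⟨y, hy, hlen⟩ := hr₂ (g⁻¹ * b) hb
    refine ⟨y, hy, ?_⟩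
    unfold wordDist
    rw [show y⁻¹ * b = ((g⁻¹ * b)⁻¹ * g⁻¹ * y)⁻¹ by group, wordLength_inv S hgen]
    exact le_max_of_le_right hlen

lemma hdSet_coset_nonempty (hgen : Subgroup.closure S = ⊤) (han : AlmostNormal H) (g k : G) :
    (hdSet S (g • (H : Set G)) (k • (H : Set G))).Nonempty := by
  have h1 : k • (H : Set G) = g • ((g⁻¹ * k) • (H : Set G)) := by
    rw [smul_smul, mul_inv_cancel_left]
  rw [h1, show g • (H : Set G) = g • ((1 : G) • (H : Set G)) by rw [one_smul],
    hdSet_smul S hgen, one_smul]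
  exact hdSet_coset_nonempty_one S H hgen han (g⁻¹ * k)

/-- Hausdorff distance from a coset to itself is at most `0`. -/
lemma hd_coset_self_le (A : Set G) : wordHausdorffDist S A A ≤ 0 := by
  apply wordHausdorffDist_le
  refine ⟨le_refl 0, fun a ha => ⟨a, ha, ?_⟩, fun a ha => ⟨a, ha, ?_⟩⟩ <;>
  · unfold wordDist
    simp [wordLength_one]

/-- The distance from `g•H` to an adjacent coset `(g*s)•H` is at most `K`. -/
lemma hd_adjacent (hgen : Subgroup.closure S = ⊤) (hS : S.Finite) (K : ℝ)
    (hK : K = sSup ((fun s => wordHausdorffDist S (H : Set G) (s • (H : Set G))) '' S))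
    {s : G} (hs : s ∈ S ∪ S⁻¹) (g : G) :
    wordHausdorffDist S (g • (H : Set G)) ((g * s) • (H : Set G)) ≤ K := by
  have htrans : ∀ u : G, wordHausdorffDist S (g • (H : Set G)) ((g * u) • (H : Set G)) =
      wordHausdorffDist S (H : Set G) (u • (H : Set G)) := by
    intro u
    rw [wordHausdorffDist_eq, wordHausdorffDist_eq,
      show (g * u) • (H : Set G) = g • (u • (H : Set G)) by rw [smul_smul],
      show g • (H : Set G) = g • ((1 : G) • (H : Set G)) by rw [one_smul],
      hdSet_smul S hgen, one_smul]
  rw [htrans]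
  have hbdd : BddAbove ((fun s => wordHausdorffDist S (H : Set G) (s • (H : Set G))) '' S) :=
    (hS.image _).bddAbove
  rcases hs with hs | hs
  · rw [hK]
    exact le_csSup hbdd (Set.mem_image_of_mem _ hs)
  · -- s⁻¹ ∈ S
    have hs' : s⁻¹ ∈ S := hs
    have heq : wordHausdorffDist S (H : Set G) (s • (H : Set G)) =
        wordHausdorffDist S (H : Set G) (s⁻¹ • (H : Set G)) := by
      rw [wordHausdorffDist_eq, wordHausdorffDist_eq,
        show hdSet S (H : Set G) (s • (H : Set G)) =
          hdSet S (s⁻¹ • (H : Set G)) (s⁻¹ • (s • (H : Set G))) by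
            rw [hdSet_smul S hgen],
        smul_smul, inv_mul_cancel, one_smul, hdSet_comm S hgen]
    rw [heq, hK]
    exact le_csSup hbdd (Set.mem_image_of_mem _ hs')

/-- Chain bound: `d_Haus(g•H, (g * l.prod)•H) ≤ K * l.length`. -/
lemma hd_chain (hgen : Subgroup.closure S = ⊤) (hS : S.Finite) (han : AlmostNormal H) (K : ℝ)
    (hK : K = sSup ((fun s => wordHausdorffDist S (H : Set G) (s • (H : Set G))) '' S))
    (l : List G) (hl : ∀ x ∈ l, x ∈ S ∪ S⁻¹) (g : G) :
    wordHausdorffDist S (g • (H : Set G)) ((g * l.prod) • (H : Set G)) ≤ K * (l.length : ℝ) := by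
  induction l generalizing g with
  | nil =>
    simp only [List.prod_nil, mul_one, List.length_nil, Nat.cast_zero, mul_zero]
    exact hd_coset_self_le S (g • (H : Set G))
  | cons s l ih =>
    have hs : s ∈ S ∪ S⁻¹ := hl s List.mem_cons_self
    have hl' : ∀ x ∈ l, x ∈ S ∪ S⁻¹ := fun x hx => hl x (List.mem_cons_of_mem s hx)
    have htri := wordHausdorffDist_triangle S hgen
      (hdSet_coset_nonempty S H hgen han g (g * s))
      (hdSet_coset_nonempty S H hgen han (g * s) (g * s * l.prod))
    have h1 := hd_adjacent S H hgen hS K hK hs g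
    have h2 := ih hl' (g * s)
    rw [show g * (s :: l).prod = g * s * l.prod by rw [List.prod_cons]; group]
    calc wordHausdorffDist S (g • (H : Set G)) ((g * s * l.prod) • (H : Set G))
        ≤ wordHausdorffDist S (g • (H : Set G)) ((g * s) • (H : Set G)) +
          wordHausdorffDist S ((g * s) • (H : Set G)) ((g * s * l.prod) • (H : Set G)) := htri
      _ ≤ K + K * l.length := add_le_add h1 h2
      _ = K * (s :: l).length := by
          simp only [List.length_cons]
          push_cast
          ring

end Main

/-- Let `H` be an almost normal subgroup of a group `G` with finite generating set
`S`, and let `K` be the maximum over `s ∈ S` of `d_Haus(H, sH)`. Then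
(i) `d_Haus(gH, kH) ≤ K·d(g,k)` for all `g, k ∈ G`, and (ii) any two left cosets
`gH, kH` can be joined by a `K`-chain of left cosets (with respect to `d_Haus`)
of length at most `d_Haus(gH, kH)`. -/
theorem coset_space_quasi_geodesic {G : Type*} [Group G] (S : Set G) (hS : S.Finite)
    (hgen : Subgroup.closure S = ⊤) (H : Subgroup G) (han : AlmostNormal H)
    (K : ℝ)
    (hK : K = sSup ((fun s => wordHausdorffDist S (H : Set G) (s • (H : Set G))) '' S)) :
    (∀ g k : G,
      wordHausdorffDist S (g • (H : Set G)) (k • (H : Set G)) ≤ K * wordDist S g k) ∧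
    ∀ g k : G, ∃ (n : ℕ) (c : ℕ → G),
      c 0 • (H : Set G) = g • (H : Set G) ∧ c n • (H : Set G) = k • (H : Set G) ∧
      (∀ i : ℕ, i < n →
        wordHausdorffDist S (c i • (H : Set G)) (c (i + 1) • (H : Set G)) ≤ K) ∧
      (n : ℝ) ≤ wordHausdorffDist S (g • (H : Set G)) (k • (H : Set G)) := by
  constructor
  · intro g k
    obtain ⟨l, hlen, hmem, hprod⟩ := wordLength_spec S hgen (g⁻¹ * k)
    have := hd_chain S H hgen hS han K hK l hmem g
    rw [hprod, mul_inv_cancel_left, hlen] at this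
    exact this
  · intro g k
    -- the set of word lengths from g to elements of k•H
    set N : Set ℕ := {n : ℕ | ∃ b ∈ k • (H : Set G), wordLength S (g⁻¹ * b) = n} with hN
    have hNne : N.Nonempty := ⟨wordLength S (g⁻¹ * k), k, self_mem_coset H k, rfl⟩
    obtain ⟨b, hb, hblen⟩ := Nat.sInf_mem hNne
    set n : ℕ := sInf N with hn
    -- n ≤ Hausdorff distance
    have hnD : (n : ℝ) ≤ wordHausdorffDist S (g • (H : Set G)) (k • (H : Set G)) := by
      rw [wordHausdorffDist_eq]
      apply le_csInf (hdSet_coset_nonempty S H hgen han g k)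
      rintro r ⟨hr0, hr1, _⟩
      obtain ⟨b', hb', hd⟩ := hr1 g (self_mem_coset H g)
      have hmem : wordLength S (g⁻¹ * b') ∈ N := ⟨b', hb', rfl⟩
      have : n ≤ wordLength S (g⁻¹ * b') := Nat.sInf_le hmem
      calc (n : ℝ) ≤ (wordLength S (g⁻¹ * b') : ℝ) := by exact_mod_cast this
        _ ≤ r := hd
    -- get the word of length n
    obtain ⟨l, hlen, hmem, hprod⟩ := wordLength_spec S hgen (g⁻¹ * b)
    rw [hblen] at hlen
    refine ⟨n, fun i => g * (l.take i).prod, by simp, ?_, ?_, hnD⟩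
    · show (g * (l.take n).prod) • (H : Set G) = k • (H : Set G)
      rw [← hlen, List.take_length, hprod, mul_inv_cancel_left]
      exact coset_eq_of_mem H hb
    · intro i hi
      have hil : i < l.length := by rw [hlen]; exact hi
      have hstep : (l.take (i + 1)).prod = (l.take i).prod * l[i] :=
        List.prod_take_succ l i hil
      show wordHausdorffDist S ((g * (l.take i).prod) • (H : Set G))
        ((g * (l.take (i + 1)).prod) • (H : Set G)) ≤ K
      rw [hstep, ← mul_assoc]
      exact hd_adjacent S H hgen hS K hK (hmem _ (List.getElem_mem hil)) _
end
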